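/- arXiv:1302.6180 — 3 statements merged into one kernel-verified Lean document; each statement's English description precedes it below -/
import Mathlib

section
/- Let A be a commutative ring, m ≥ 1 an integer, and R = A[X_1,…,X_m] the polynomial ring. For a nonempty subset S ⊆ {1,…,m} let I_S ⊆ R be the ideal generated by {X_i : i ∈ S}. For 0 ≤ p ≤ m−1 set C^p := ⊕_{S ⊆ {1,…,m}, |S| = p+1} R/I_S, and let d^p : C^p → C^{p+1} be the map whose component from the summand indexed by S to the summand indexed by S ∪ {i} (for i ∉ S) is (−1)^{#{i' ∈ S : i' < i}} times the natural quotient map R/I_S → R/I_{S∪{i}}, all other components being zero. Then d^{p+1} ∘ d^p = 0, and the augmented complex 0 → R/(X_1⋯X_m) → C^0 → C^1 → ⋯ → C^{m−1} → 0 is exact, where the first map has as components the natural quotient maps R/(X_1⋯X_m) → R/(X_i) for 1 ≤ i ≤ m. -/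
/-!
Statement 4: the Cech resolution of `R/(X_1⋯X_m)` by the modules `R/I_S`,
for `R = A[X_1,…,X_m]` and `I_S` the ideal generated by the variables in `S`.
-/

open DirectSum

variable (A : Type*) [CommRing A] (m : ℕ)

/-- The polynomial ring `R = A[X_1, …, X_m]`. -/
abbrev polyR := MvPolynomial (Fin m) A

/-- The ideal `I_S` generated by the variables `X_i`, `i ∈ S`. -/
noncomputable def idealOf (S : Finset (Fin m)) : Ideal (polyR A m) :=
  Ideal.span (MvPolynomial.X '' (S : Set (Fin m)))

/-- The term `C^p = ⊕_{|S| = p+1} R/I_S` of the Cech complex. -/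
abbrev cechC (p : ℕ) :=
  ⨁ (S : {S : Finset (Fin m) // S.card = p + 1}), ((polyR A m) ⧸ idealOf A m S.val)

/-- The natural quotient map `R/I → R/J` for ideals `I ≤ J`. -/
noncomputable def quotMap (I J : Ideal (polyR A m)) (h : I ≤ J) :
    ((polyR A m) ⧸ I) →ₗ[polyR A m] ((polyR A m) ⧸ J) :=
  Submodule.mapQ I J LinearMap.id (by rwa [Submodule.comap_id])

/-- The Cech differential `d^p : C^p → C^{p+1}`, whose component from the summand
indexed by `S` to the summand indexed by `S ∪ {i}` (for `i ∉ S`) is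
`(-1) ^ #{i' ∈ S | i' < i}` times the natural quotient map, all other components
being zero. -/
noncomputable def cechD (p : ℕ) : cechC A m p →ₗ[polyR A m] cechC A m (p + 1) :=
  DirectSum.toModule (polyR A m) _ (cechC A m (p + 1)) (fun S =>
    ∑ i ∈ (S.valᶜ).attach,
      ((-1 : polyR A m) ^ (S.val.filter (fun i' => i' < i.val)).card) •
        ((DirectSum.lof (polyR A m) {T : Finset (Fin m) // T.card = p + 1 + 1}
            (fun T => (polyR A m) ⧸ idealOf A m T.val)
            ⟨insert i.val S.val, by
              rw [Finset.card_insert_of_notMem (Finset.mem_compl.mp i.property), S.property]⟩) ∘ₗ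
          quotMap A m _ _
            (Ideal.span_mono (Set.image_mono
              (Finset.coe_subset.mpr (Finset.subset_insert _ _))))))

/-- The augmentation `R/(X_1⋯X_m) → C^0 = ⊕_i R/(X_i)`, with components the
natural quotient maps. -/
noncomputable def cechAug :
    ((polyR A m) ⧸ Ideal.span {(∏ i : Fin m, MvPolynomial.X i : polyR A m)})
      →ₗ[polyR A m] cechC A m 0 :=
  ∑ i : Fin m,
    (DirectSum.lof (polyR A m) {T : Finset (Fin m) // T.card = 0 + 1}
        (fun T => (polyR A m) ⧸ idealOf A m T.val)
        ⟨({i} : Finset (Fin m)), Finset.card_singleton i⟩) ∘ₗ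
      quotMap A m _ _ (by
        rw [Ideal.span_le]
        intro x hx
        simp only [Set.mem_singleton_iff] at hx
        subst hx
        obtain ⟨c, hc⟩ := Finset.dvd_prod_of_mem (fun j => (MvPolynomial.X j : polyR A m)) (Finset.mem_univ i)
        rw [hc]
        exact Ideal.mul_mem_right c _ (Ideal.subset_span (by simp)))

-- ====================== auxiliary development ======================


open MvPolynomial

noncomputable def piS (S : Finset (Fin m)) : polyR A m →ₐ[A] polyR A m :=
  MvPolynomial.aeval (fun i => if i ∈ S then 0 else MvPolynomial.X i)

lemma mk_piS (S : Finset (Fin m)) (f : polyR A m) :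
    Ideal.Quotient.mk (idealOf A m S) (piS A m S f) = Ideal.Quotient.mk _ f := by
  have h : (Ideal.Quotient.mkₐ A (idealOf A m S)).comp (piS A m S) =
      Ideal.Quotient.mkₐ A (idealOf A m S) := by
    apply MvPolynomial.algHom_ext
    intro i
    simp only [AlgHom.comp_apply, piS, aeval_X, Ideal.Quotient.mkₐ_eq_mk]
    split_ifs with hi
    · rw [map_zero]
      exact (Ideal.Quotient.eq_zero_iff_mem.2
        (Ideal.subset_span (Set.mem_image_of_mem _ hi))).symm
    · rfl
  exact DFunLike.congr_fun h f

lemma piS_monomial (S : Finset (Fin m)) (a : Fin m →₀ ℕ) (c : A) :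
    piS A m S (monomial a c) =
      if Disjoint a.support S then monomial a c else 0 := by
  rw [piS, aeval_monomial]
  split_ifs with hd
  · rw [monomial_eq]
    congr 1
    rw [Finsupp.prod]
    apply Finset.prod_congr rfl
    intro i hi
    rw [if_neg (Finset.disjoint_left.1 hd hi)]
  · rw [Finset.disjoint_left] at hd
    push_neg at hd
    obtain ⟨i, hi, hiS⟩ := hd
    rw [Finsupp.prod, Finset.prod_eq_zero hi, mul_zero]
    rw [if_pos hiS]
    exact zero_pow (Finsupp.mem_support_iff.1 hi)

lemma mem_idealOf_iff (S : Finset (Fin m)) (f : polyR A m) :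
    f ∈ idealOf A m S ↔ piS A m S f = 0 := by
  constructor
  · intro hf
    have : idealOf A m S ≤ RingHom.ker (piS A m S).toRingHom := by
      rw [idealOf, Ideal.span_le]
      rintro x ⟨i, hi, rfl⟩
      simp [RingHom.mem_ker, piS, Finset.mem_coe.1 hi]
    exact this hf
  · intro hf
    have := mk_piS A m S f
    rw [hf, map_zero] at this
    exact Ideal.Quotient.eq_zero_iff_mem.1 this.symm

lemma monomial_mem_idealOf (S : Finset (Fin m)) (a : Fin m →₀ ℕ) (c : A)
    (h : ¬ Disjoint a.support S) : monomial a c ∈ idealOf A m S := by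
  rw [mem_idealOf_iff, piS_monomial, if_neg h]

noncomputable def secS (S : Finset (Fin m)) : (polyR A m ⧸ idealOf A m S) →ₗ[A] polyR A m :=
  (Submodule.liftQ ((idealOf A m S).restrictScalars A) (piS A m S).toLinearMap
    (fun f hf => by
      rw [LinearMap.mem_ker, AlgHom.toLinearMap_apply]
      exact (mem_idealOf_iff A m S f).1 hf)) ∘ₗ
  (Submodule.Quotient.restrictScalarsEquiv A (idealOf A m S)).symm.toLinearMap

lemma secS_mk (S : Finset (Fin m)) (f : polyR A m) :
    secS A m S (Ideal.Quotient.mk (idealOf A m S) f) = piS A m S f := rfl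

/-- `lof` of `mk f` at index `T`, as a total function of the finset `T`. -/
noncomputable def elofF (q : ℕ) (T : Finset (Fin m)) (f : polyR A m) : cechC A m q :=
  if hT : T.card = q + 1 then
    DirectSum.lof (polyR A m) {S : Finset (Fin m) // S.card = q + 1}
      (fun S => (polyR A m) ⧸ idealOf A m S.val) ⟨T, hT⟩ (Ideal.Quotient.mk _ f)
  else 0

lemma elofF_of_card (q : ℕ) (T : Finset (Fin m)) (hT : T.card = q + 1) (f : polyR A m) :
    elofF A m q T f =
      DirectSum.lof (polyR A m) {S : Finset (Fin m) // S.card = q + 1}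
        (fun S => (polyR A m) ⧸ idealOf A m S.val) ⟨T, hT⟩ (Ideal.Quotient.mk _ f) :=
  dif_pos hT

lemma elofF_monomial_eq_zero (q : ℕ) (T : Finset (Fin m)) (a : Fin m →₀ ℕ) (c : A)
    (i : Fin m) (hi : i ∈ a.support) (hiT : i ∈ T) :
    elofF A m q T (monomial a c) = 0 := by
  rw [elofF]
  split_ifs with hT
  · rw [Ideal.Quotient.eq_zero_iff_mem.2
      (monomial_mem_idealOf A m T a c (Finset.not_disjoint_iff.2 ⟨i, hi, hiT⟩)), map_zero]
  · rfl

lemma lsum_apply' {R M N ι : Type*} {_ : Semiring R} {_ : AddCommMonoid M}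
    {_ : AddCommMonoid N} {_ : Module R M} {_ : Module R N} (t : Finset ι)
    (g : ι → M →ₗ[R] N) (x : M) : (∑ i ∈ t, g i) x = ∑ i ∈ t, g i x :=
  LinearMap.sum_apply t g x

lemma lsmul_apply' {R M N : Type*} {_ : CommSemiring R} {_ : AddCommMonoid M}
    {_ : AddCommMonoid N} {_ : Module R M} {_ : Module R N} (c : R)
    (g : M →ₗ[R] N) (x : M) : (c • g) x = c • g x :=
  LinearMap.smul_apply c g x

lemma cechD_elofF (q : ℕ) (T : Finset (Fin m)) (hT : T.card = q + 1) (f : polyR A m) :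
    cechD A m q (elofF A m q T f) =
      ∑ i ∈ Tᶜ, ((-1 : polyR A m) ^ (T.filter (fun i' => i' < i)).card) •
        elofF A m (q + 1) (insert i T) f := by
  rw [elofF_of_card A m q T hT, cechD, DirectSum.toModule_lof]
  refine (lsum_apply' _ _ _).trans ?_
  rw [← Finset.sum_attach Tᶜ (fun i => ((-1 : polyR A m) ^ (T.filter (fun i' => i' < i)).card) •
        elofF A m (q + 1) (insert i T) f)]
  apply Finset.sum_congr rfl
  intro i _
  refine (lsmul_apply' _ _ _).trans ?_
  congr 1
  rw [elofF_of_card A m (q+1) _ (by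
    rw [Finset.card_insert_of_notMem (Finset.mem_compl.mp i.property), hT])]
  rfl
lemma cechAug_mk (f : polyR A m) :
    cechAug A m (Ideal.Quotient.mk _ f) = ∑ i : Fin m, elofF A m 0 ({i} : Finset (Fin m)) f := by
  rw [cechAug, LinearMap.sum_apply]
  apply Finset.sum_congr rfl
  intro i _
  rw [LinearMap.comp_apply, elofF_of_card A m 0 _ (Finset.card_singleton i)]
  rfl

/-- The basic homotopy building block. -/
noncomputable def targ (p : ℕ) (T : Finset (Fin m)) (a : Fin m →₀ ℕ) : cechC A m p :=
  if hU : (a.supportᶜ : Finset (Fin m)).Nonempty then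
    if (a.supportᶜ : Finset (Fin m)).min' hU ∈ T then
      elofF A m p (T.erase ((a.supportᶜ : Finset (Fin m)).min' hU)) (monomial a 1)
    else 0
  else 0

noncomputable def HS (p : ℕ) (T : Finset (Fin m)) : polyR A m →ₗ[A] cechC A m p :=
  (MvPolynomial.basisMonomials (Fin m) A).constr A (fun a => targ A m p T a)

/-- The homotopy `C^{p+1} → C^p`. -/
noncomputable def cechH (p : ℕ) : cechC A m (p + 1) →ₗ[A] cechC A m p :=
  DirectSum.toModule A {S : Finset (Fin m) // S.card = p + 1 + 1} (cechC A m p)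
    (fun S => (HS A m p S.val) ∘ₗ secS A m S.val)

lemma HS_monomial (p : ℕ) (T : Finset (Fin m)) (a : Fin m →₀ ℕ) :
    HS A m p T (monomial a 1) = targ A m p T a := by
  have : (monomial a 1 : polyR A m) = MvPolynomial.basisMonomials (Fin m) A a := by
    rw [coe_basisMonomials]
  rw [HS, this, Module.Basis.constr_basis]

lemma cechH_elofF (p : ℕ) (T : Finset (Fin m)) (hT : T.card = p + 1 + 1) (a : Fin m →₀ ℕ) :
    cechH A m p (elofF A m (p + 1) T (monomial a 1)) =
      if Disjoint a.support T then targ A m p T a else 0 := by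
  rw [elofF_of_card A m (p+1) T hT]
  have hlof : DirectSum.lof (polyR A m) {S : Finset (Fin m) // S.card = p + 1 + 1}
      (fun S => (polyR A m) ⧸ idealOf A m S.val) ⟨T, hT⟩
        (Ideal.Quotient.mk _ (monomial a 1)) =
      DirectSum.lof A {S : Finset (Fin m) // S.card = p + 1 + 1}
      (fun S => (polyR A m) ⧸ idealOf A m S.val) ⟨T, hT⟩
        (Ideal.Quotient.mk _ (monomial a 1)) := rfl
  rw [hlof, cechH, DirectSum.toModule_lof, LinearMap.comp_apply, secS_mk, piS_monomial]
  split_ifs with hd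
  · exact HS_monomial A m p T a
  · exact map_zero _
/-- `R/(X_1⋯X_m)`, the degree `-1` term. -/
abbrev cechCm1 := (polyR A m) ⧸ Ideal.span {(∏ i : Fin m, MvPolynomial.X i : polyR A m)}

noncomputable def targ0 (T : Finset (Fin m)) (a : Fin m →₀ ℕ) : cechCm1 A m :=
  if hU : (a.supportᶜ : Finset (Fin m)).Nonempty then
    if (a.supportᶜ : Finset (Fin m)).min' hU ∈ T then
      Ideal.Quotient.mk _ (monomial a 1)
    else 0
  else 0

noncomputable def H0 (T : Finset (Fin m)) : polyR A m →ₗ[A] cechCm1 A m :=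
  (MvPolynomial.basisMonomials (Fin m) A).constr A (fun a => targ0 A m T a)

/-- The homotopy `C^0 → R/(X_1⋯X_m)`. -/
noncomputable def cechH0 : cechC A m 0 →ₗ[A] cechCm1 A m :=
  DirectSum.toModule A {S : Finset (Fin m) // S.card = 0 + 1} (cechCm1 A m)
    (fun S => (H0 A m S.val) ∘ₗ secS A m S.val)

lemma H0_monomial (T : Finset (Fin m)) (a : Fin m →₀ ℕ) :
    H0 A m T (monomial a 1) = targ0 A m T a := by
  have : (monomial a 1 : polyR A m) = MvPolynomial.basisMonomials (Fin m) A a := by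
    rw [coe_basisMonomials]
  rw [H0, this, Module.Basis.constr_basis]

lemma cechH0_elofF (T : Finset (Fin m)) (hT : T.card = 0 + 1) (a : Fin m →₀ ℕ) :
    cechH0 A m (elofF A m 0 T (monomial a 1)) =
      if Disjoint a.support T then targ0 A m T a else 0 := by
  rw [elofF_of_card A m 0 T hT]
  have hlof : DirectSum.lof (polyR A m) {S : Finset (Fin m) // S.card = 0 + 1}
      (fun S => (polyR A m) ⧸ idealOf A m S.val) ⟨T, hT⟩
        (Ideal.Quotient.mk _ (monomial a 1)) =
      DirectSum.lof A {S : Finset (Fin m) // S.card = 0 + 1}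
      (fun S => (polyR A m) ⧸ idealOf A m S.val) ⟨T, hT⟩
        (Ideal.Quotient.mk _ (monomial a 1)) := rfl
  rw [hlof, cechH0, DirectSum.toModule_lof, LinearMap.comp_apply, secS_mk, piS_monomial]
  split_ifs with hd
  · exact H0_monomial A m T a
  · exact map_zero _

-- ============== combinatorial lemmas ==============

lemma filt_insert_card (S : Finset (Fin m)) {i : Fin m} (hi : i ∉ S) (i' : Fin m) :
    ((insert i S).filter (fun x => x < i')).card =
      (S.filter (fun x => x < i')).card + if i < i' then 1 else 0 := by
  rw [Finset.filter_insert]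
  split_ifs with h
  · rw [Finset.card_insert_of_notMem (fun hmem => hi (Finset.mem_of_mem_filter _ hmem))]
  · rw [add_zero]

lemma filt_min_card (U S : Finset (Fin m)) (hU : U.Nonempty) (hSU : S ⊆ U) :
    (S.filter (fun x => x < U.min' hU)).card = 0 := by
  rw [Finset.card_eq_zero, Finset.filter_eq_empty_iff]
  intro s hs
  exact not_lt.2 (U.min'_le s (hSU hs))

lemma lmap_neg_one_pow_smul {M N : Type*} [AddCommGroup M] [AddCommGroup N]
    [Module (polyR A m) M] [Module (polyR A m) N] [Module A M] [Module A N]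
    (F : M →ₗ[A] N) (k : ℕ) (y : M) :
    F ((-1 : polyR A m) ^ k • y) = (-1 : polyR A m) ^ k • F y := by
  have e : ((-1 : polyR A m)) ^ k = (((-1 : ℤ) ^ k : ℤ) : polyR A m) := by push_cast; ring
  rw [e, Int.cast_smul_eq_zsmul, Int.cast_smul_eq_zsmul, map_zsmul]

lemma sum_sum_erase_antisymm {α N : Type*} [DecidableEq α] [AddCommGroup N] (s : Finset α)
    (F : α → α → N) (hF : ∀ i ∈ s, ∀ i' ∈ s, i ≠ i' → F i i' + F i' i = 0) :
    (∑ i ∈ s, ∑ i' ∈ s.erase i, F i i') = 0 := by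
  rw [Finset.sum_sigma']
  refine Finset.sum_involution (fun p _ => ⟨p.2, p.1⟩) ?_ ?_ ?_ ?_
  · intro p hp
    rw [Finset.mem_sigma] at hp
    exact hF p.1 hp.1 p.2 (Finset.mem_of_mem_erase hp.2)
      (fun h => (Finset.ne_of_mem_erase hp.2) h.symm)
  · intro p hp _
    rw [Finset.mem_sigma] at hp
    intro h
    exact (Finset.ne_of_mem_erase hp.2) (congrArg Sigma.fst h)
  · intro p hp
    rw [Finset.mem_sigma] at hp ⊢
    exact ⟨Finset.mem_of_mem_erase hp.2,
      Finset.mem_erase.2 ⟨fun h => (Finset.ne_of_mem_erase hp.2) h.symm, hp.1⟩⟩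
  · intro p hp
    rfl
-- ============== extensionality ==============

lemma cech_ext {N : Type*} [AddCommGroup N] [Module A N] (p : ℕ)
    (F G : cechC A m p →ₗ[A] N)
    (h : ∀ (T : Finset (Fin m)) (hT : T.card = p + 1) (a : Fin m →₀ ℕ),
      Disjoint a.support T →
        F (elofF A m p T (monomial a 1)) = G (elofF A m p T (monomial a 1))) :
    F = G := by
  refine DirectSum.linearMap_ext A fun S => ?_
  obtain ⟨T, hT⟩ := S
  rw [← LinearMap.cancel_right
    (g := (Ideal.Quotient.mkₐ A (idealOf A m T)).toLinearMap)
    (Ideal.Quotient.mkₐ_surjective A _)]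
  apply Module.Basis.ext (MvPolynomial.basisMonomials (Fin m) A)
  intro a
  have hb : MvPolynomial.basisMonomials (Fin m) A a = (monomial a 1 : polyR A m) := by
    rw [coe_basisMonomials]
  simp only [LinearMap.comp_apply, AlgHom.toLinearMap_apply, Ideal.Quotient.mkₐ_eq_mk, hb]
  have hlof : DirectSum.lof A {S : Finset (Fin m) // S.card = p + 1}
      (fun S => (polyR A m) ⧸ idealOf A m S.val) ⟨T, hT⟩
        (Ideal.Quotient.mk _ (monomial a 1)) = elofF A m p T (monomial a 1) :=
    (elofF_of_card A m p T hT _).symm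
  rw [hlof]
  by_cases hd : Disjoint a.support T
  · exact h T hT a hd
  · rw [elofF, dif_pos hT, Ideal.Quotient.eq_zero_iff_mem.2
      (monomial_mem_idealOf A m T a 1 hd), map_zero, map_zero, map_zero]

-- ============== d ∘ d = 0 ==============

theorem cechDD (p : ℕ) : (cechD A m (p + 1)).comp (cechD A m p) = 0 := by
  refine DirectSum.linearMap_ext (polyR A m) fun S => ?_
  obtain ⟨T, hT⟩ := S
  apply LinearMap.ext
  intro x
  obtain ⟨f, rfl⟩ := Ideal.Quotient.mk_surjective x
  simp only [LinearMap.comp_apply, LinearMap.zero_apply]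
  have e0 : DirectSum.lof (polyR A m) {S : Finset (Fin m) // S.card = p + 1}
      (fun S => (polyR A m) ⧸ idealOf A m S.val) ⟨T, hT⟩ (Ideal.Quotient.mk _ f)
      = elofF A m p T f := (elofF_of_card A m p T hT f).symm
  rw [e0, cechD_elofF A m p T hT, map_sum]
  have step : ∀ i ∈ Tᶜ,
      cechD A m (p + 1) (((-1 : polyR A m) ^ (T.filter (fun x => x < i)).card) •
        elofF A m (p + 1) (insert i T) f) =
      ∑ i' ∈ Tᶜ.erase i,
        (((-1 : polyR A m) ^ (T.filter (fun x => x < i)).card *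
          (-1) ^ ((insert i T).filter (fun x => x < i')).card)) •
          elofF A m (p + 1 + 1) (insert i' (insert i T)) f := by
    intro i hi
    rw [map_smul, cechD_elofF A m (p + 1) _
      (by rw [Finset.card_insert_of_notMem (Finset.mem_compl.1 hi), hT]),
      Finset.compl_insert, Finset.smul_sum]
    apply Finset.sum_congr rfl
    intro i' _
    rw [smul_smul]
  rw [Finset.sum_congr rfl step]
  apply sum_sum_erase_antisymm (N := cechC A m (p + 1 + 1))
  intro i hi i' hi' hne
  have hiT : i ∉ T := Finset.mem_compl.1 hi
  have hi'T : i' ∉ T := Finset.mem_compl.1 hi'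
  have hidx : insert i' (insert i T) = insert i (insert i' T) := Finset.insert_comm _ _ _
  rw [hidx, ← add_smul]
  convert zero_smul (polyR A m) _
  rw [filt_insert_card (m := m) T hiT i', filt_insert_card (m := m) T hi'T i]
  rcases hne.lt_or_gt with hlt | hlt
  · rw [if_pos hlt, if_neg (not_lt.2 hlt.le)]
    simp [pow_add, pow_succ]
    ring
  · rw [if_neg (not_lt.2 hlt.le), if_pos hlt]
    simp [pow_add, pow_succ]
    ring

-- ============== d⁰ ∘ aug = 0 ==============

theorem cechD_aug : (cechD A m 0).comp (cechAug A m) = 0 := by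
  apply LinearMap.ext
  intro x
  obtain ⟨f, rfl⟩ := Ideal.Quotient.mk_surjective x
  simp only [LinearMap.comp_apply, LinearMap.zero_apply]
  rw [cechAug_mk, map_sum]
  have step : ∀ i ∈ (Finset.univ : Finset (Fin m)),
      cechD A m 0 (elofF A m 0 ({i} : Finset (Fin m)) f) =
      ∑ i' ∈ Finset.univ.erase i,
        ((-1 : polyR A m) ^ (({i} : Finset (Fin m)).filter (fun x => x < i')).card) •
          elofF A m (0 + 1) (insert i' ({i} : Finset (Fin m))) f := by
    intro i _
    rw [cechD_elofF A m 0 _ (Finset.card_singleton i), Finset.compl_singleton]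
  rw [Finset.sum_congr rfl step]
  apply sum_sum_erase_antisymm (N := cechC A m (0 + 1))
  intro i _ i' _ hne
  have hidx : insert i' ({i} : Finset (Fin m)) = insert i ({i'} : Finset (Fin m)) := by
    exact Finset.pair_comm i' i
  rw [hidx, ← add_smul]
  convert zero_smul (polyR A m) _
  rw [Finset.filter_singleton, Finset.filter_singleton]
  rcases hne.lt_or_gt with hlt | hlt
  · rw [if_pos hlt, if_neg (not_lt.2 hlt.le)]
    simp
  · rw [if_neg (not_lt.2 hlt.le), if_pos hlt]
    simp
-- ============== targ unfolding ==============

lemma targ_pos (p' : ℕ) (T' : Finset (Fin m)) (a : Fin m →₀ ℕ)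
    (hU : (a.supportᶜ : Finset (Fin m)).Nonempty)
    (hj : (a.supportᶜ : Finset (Fin m)).min' hU ∈ T') :
    targ A m p' T' a =
      elofF A m p' (T'.erase ((a.supportᶜ : Finset (Fin m)).min' hU)) (monomial a 1) := by
  rw [targ, dif_pos hU, if_pos hj]

lemma targ_neg (p' : ℕ) (T' : Finset (Fin m)) (a : Fin m →₀ ℕ)
    (hU : (a.supportᶜ : Finset (Fin m)).Nonempty)
    (hj : (a.supportᶜ : Finset (Fin m)).min' hU ∉ T') :
    targ A m p' T' a = 0 := by
  rw [targ, dif_pos hU, if_neg hj]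

lemma targ0_pos (T' : Finset (Fin m)) (a : Fin m →₀ ℕ)
    (hU : (a.supportᶜ : Finset (Fin m)).Nonempty)
    (hj : (a.supportᶜ : Finset (Fin m)).min' hU ∈ T') :
    targ0 A m T' a = Ideal.Quotient.mk _ (monomial a 1) := by
  rw [targ0, dif_pos hU, if_pos hj]

lemma targ0_neg (T' : Finset (Fin m)) (a : Fin m →₀ ℕ)
    (hU : (a.supportᶜ : Finset (Fin m)).Nonempty)
    (hj : (a.supportᶜ : Finset (Fin m)).min' hU ∉ T') :
    targ0 A m T' a = 0 := by
  rw [targ0, dif_pos hU, if_neg hj]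

-- ============== the homotopy identity in degrees ≥ 1 ==============

set_option maxHeartbeats 1000000 in
theorem homotopy_succ (p : ℕ) :
    ((cechD A m p).restrictScalars A) ∘ₗ cechH A m p
      + (cechH A m (p + 1)) ∘ₗ ((cechD A m (p + 1)).restrictScalars A)
      = LinearMap.id := by
  refine cech_ext A m (p + 1) (N := cechC A m (p + 1)) _ _ ?_
  intro T hT a hd
  simp only [LinearMap.add_apply, LinearMap.comp_apply, LinearMap.restrictScalars_apply,
    LinearMap.id_apply]
  have hTU : T ⊆ (a.supportᶜ : Finset (Fin m)) := fun s hs =>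
    Finset.mem_compl.2 (Finset.disjoint_right.1 hd hs)
  have hTne : T.Nonempty := Finset.card_pos.1 (by rw [hT]; omega)
  have hU : (a.supportᶜ : Finset (Fin m)).Nonempty := ⟨hTne.choose, hTU hTne.choose_spec⟩
  set j := (a.supportᶜ : Finset (Fin m)).min' hU with hjdef
  have hjsupp : j ∉ a.support := Finset.mem_compl.1 (Finset.min'_mem _ hU)
  rw [cechH_elofF A m p T hT a, if_pos hd]
  -- the terms of `h ∘ d`
  have hterm2 : ∀ i ∈ Tᶜ,
      cechH A m (p + 1) (((-1 : polyR A m) ^ (T.filter (fun x => x < i)).card) •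
        elofF A m (p + 1 + 1) (insert i T) (monomial a 1)) =
      ((-1 : polyR A m) ^ (T.filter (fun x => x < i)).card) •
        (if j ∈ insert i T then
          elofF A m (p + 1) ((insert i T).erase j) (monomial a 1) else 0) := by
    intro i hi
    have hsm : ∀ (k : ℕ) (y : cechC A m (p + 1 + 1)), cechH A m (p + 1) ((-1 : polyR A m) ^ k • y)
        = (-1 : polyR A m) ^ k • cechH A m (p + 1) y := by
      intro k y
      rcases neg_one_pow_eq_or (polyR A m) k with h | h
      · simp only [h]; exact (congrArg _ (one_smul _ y)).trans (one_smul _ _).symm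
      · simp only [h]
        exact (congrArg _ (neg_one_smul _ y)).trans ((map_neg _ y).trans (neg_one_smul _ _).symm)
    rw [hsm,
      cechH_elofF A m (p + 1) _
      (by rw [Finset.card_insert_of_notMem (Finset.mem_compl.1 hi), hT])]
    congr 1
    by_cases hia : i ∈ a.support
    · rw [if_neg (by rw [Finset.disjoint_insert_right]; tauto)]
      split_ifs with hji
      · exact (elofF_monomial_eq_zero A m (p + 1) _ a 1 i hia
          (Finset.mem_erase.2 ⟨fun h : i = j => hjsupp (h ▸ hia), Finset.mem_insert_self i T⟩)).symm
      · rfl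
    · rw [if_pos (Finset.disjoint_insert_right.2 ⟨hia, hd⟩)]
      split_ifs with hji
      · exact targ_pos A m (p + 1) (insert i T) a hU hji
      · exact targ_neg A m (p + 1) (insert i T) a hU hji
  by_cases hjT : j ∈ T
  · -- case `j ∈ T`
    rw [targ_pos A m p T a hU hjT, cechD_elofF A m p _
      (by rw [Finset.card_erase_of_mem hjT, hT]; omega), Finset.compl_erase,
      Finset.sum_insert (by simpa using hjT),
      filt_min_card (m := m) _ _ hU (fun s hs => hTU (Finset.mem_of_mem_erase hs)),
      pow_zero, one_smul, Finset.insert_erase hjT]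
    rw [cechD_elofF A m (p + 1) T hT, map_sum, Finset.sum_congr rfl hterm2]
    have hsimp : ∀ i ∈ Tᶜ,
        ((-1 : polyR A m) ^ ((T.erase j).filter (fun x => x < i)).card) •
          elofF A m (p + 1) (insert i (T.erase j)) (monomial a 1)
        + ((-1 : polyR A m) ^ (T.filter (fun x => x < i)).card) •
          (if j ∈ insert i T then
            elofF A m (p + 1) ((insert i T).erase j) (monomial a 1) else 0) = 0 := by
      intro i hi
      have hiT : i ∉ T := Finset.mem_compl.1 hi
      have hij : i ≠ j := fun h => hiT (h ▸ hjT)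
      rw [if_pos (Finset.mem_insert_of_mem hjT), Finset.erase_insert_of_ne hij]
      by_cases hia : i ∈ a.support
      · rw [elofF_monomial_eq_zero A m (p + 1) _ a 1 i hia (Finset.mem_insert_self _ _),
          smul_zero, smul_zero, add_zero]
      · have hji : j < i := lt_of_le_of_ne
          (Finset.min'_le _ i (Finset.mem_compl.2 hia)) (Ne.symm hij)
        have hc : (T.filter (fun x => x < i)).card
            = ((T.erase j).filter (fun x => x < i)).card + 1 := by
          conv_lhs => rw [← Finset.insert_erase hjT]
          rw [filt_insert_card (m := m) _ (Finset.notMem_erase _ _) i, if_pos hji]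
        rw [hc, ← add_smul, pow_succ, mul_neg_one, add_neg_cancel, zero_smul]
    rw [add_assoc, ← Finset.sum_add_distrib, Finset.sum_congr rfl hsimp,
      Finset.sum_const_zero, add_zero]
  · -- case `j ∉ T`
    rw [targ_neg A m p T a hU hjT, map_zero, zero_add]
    rw [cechD_elofF A m (p + 1) T hT, map_sum, Finset.sum_congr rfl hterm2]
    rw [Finset.sum_eq_single_of_mem j (Finset.mem_compl.2 hjT)]
    · rw [if_pos (Finset.mem_insert_self j T), Finset.erase_insert hjT,
        filt_min_card (m := m) _ _ hU hTU, pow_zero, one_smul]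
    · intro i hi hij
      rw [if_neg (by
        intro hmem
        rcases Finset.mem_insert.1 hmem with h | h
        · exact hij h.symm
        · exact hjT h), smul_zero]
-- ============== the homotopy identity in degree 0 ==============

set_option maxHeartbeats 1000000 in
theorem homotopy_zero :
    ((cechAug A m).restrictScalars A) ∘ₗ cechH0 A m
      + (cechH A m 0) ∘ₗ ((cechD A m 0).restrictScalars A)
      = LinearMap.id := by
  refine cech_ext A m 0 (N := cechC A m 0) _ _ ?_
  intro T hT a hd
  simp only [LinearMap.add_apply, LinearMap.comp_apply, LinearMap.restrictScalars_apply,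
    LinearMap.id_apply]
  have hTU : T ⊆ (a.supportᶜ : Finset (Fin m)) := fun s hs =>
    Finset.mem_compl.2 (Finset.disjoint_right.1 hd hs)
  have hTne : T.Nonempty := Finset.card_pos.1 (by rw [hT]; omega)
  have hU : (a.supportᶜ : Finset (Fin m)).Nonempty := ⟨hTne.choose, hTU hTne.choose_spec⟩
  set j := (a.supportᶜ : Finset (Fin m)).min' hU with hjdef
  have hjsupp : j ∉ a.support := Finset.mem_compl.1 (Finset.min'_mem _ hU)
  rw [cechH0_elofF A m T hT a, if_pos hd]
  have hterm2 : ∀ i ∈ Tᶜ,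
      cechH A m 0 (((-1 : polyR A m) ^ (T.filter (fun x => x < i)).card) •
        elofF A m (0 + 1) (insert i T) (monomial a 1)) =
      ((-1 : polyR A m) ^ (T.filter (fun x => x < i)).card) •
        (if j ∈ insert i T then
          elofF A m 0 ((insert i T).erase j) (monomial a 1) else 0) := by
    intro i hi
    have hsm : ∀ (k : ℕ) (y : cechC A m (0 + 1)), cechH A m 0 ((-1 : polyR A m) ^ k • y)
        = (-1 : polyR A m) ^ k • cechH A m 0 y := by
      intro k y
      rcases neg_one_pow_eq_or (polyR A m) k with h | h
      · simp only [h]; exact (congrArg _ (one_smul _ y)).trans (one_smul _ _).symm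
      · simp only [h]
        exact (congrArg _ (neg_one_smul _ y)).trans ((map_neg _ y).trans (neg_one_smul _ _).symm)
    rw [hsm,
      cechH_elofF A m 0 _
      (by rw [Finset.card_insert_of_notMem (Finset.mem_compl.1 hi), hT])]
    congr 1
    by_cases hia : i ∈ a.support
    · rw [if_neg (by rw [Finset.disjoint_insert_right]; tauto)]
      split_ifs with hji
      · exact (elofF_monomial_eq_zero A m 0 _ a 1 i hia
          (Finset.mem_erase.2 ⟨fun h : i = j => hjsupp (h ▸ hia),
            Finset.mem_insert_self i T⟩)).symm
      · rfl
    · rw [if_pos (Finset.disjoint_insert_right.2 ⟨hia, hd⟩)]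
      split_ifs with hji
      · exact targ_pos A m 0 (insert i T) a hU hji
      · exact targ_neg A m 0 (insert i T) a hU hji
  by_cases hjT : j ∈ T
  · -- case `j ∈ T`, i.e. `T = {j}`
    have hTj : T = {j} := by
      obtain ⟨t, rfl⟩ := Finset.card_eq_one.1 hT
      rw [Finset.mem_singleton.1 hjT]
    rw [targ0_pos A m T a hU hjT, cechAug_mk, Finset.sum_eq_add_sum_sdiff_singleton_of_mem
      (Finset.mem_univ j) (fun i => elofF A m 0 ({i} : Finset (Fin m)) (monomial a 1))]
    have huniv : Finset.univ \ {j} = Tᶜ := by rw [hTj, Finset.compl_singleton,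
      Finset.sdiff_singleton_eq_erase]
    rw [huniv, ← hTj]
    rw [cechD_elofF A m 0 T hT, map_sum, Finset.sum_congr rfl hterm2]
    have hsimp : ∀ i ∈ Tᶜ,
        elofF A m 0 ({i} : Finset (Fin m)) (monomial a 1)
        + ((-1 : polyR A m) ^ (T.filter (fun x => x < i)).card) •
          (if j ∈ insert i T then
            elofF A m 0 ((insert i T).erase j) (monomial a 1) else 0) = 0 := by
      intro i hi
      have hiT : i ∉ T := Finset.mem_compl.1 hi
      have hij : i ≠ j := fun h => hiT (h ▸ hjT)
      have herase : (insert i T).erase j = {i} := by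
        rw [Finset.erase_insert_of_ne hij, hTj, Finset.erase_singleton]
        rfl
      rw [if_pos (Finset.mem_insert_of_mem hjT), herase]
      by_cases hia : i ∈ a.support
      · rw [elofF_monomial_eq_zero A m 0 _ a 1 i hia (Finset.mem_singleton_self i),
          smul_zero, add_zero]
      · have hji : j < i := lt_of_le_of_ne
          (Finset.min'_le _ i (Finset.mem_compl.2 hia)) (Ne.symm hij)
        have hc : (T.filter (fun x => x < i)).card = 1 := by
          rw [hTj, Finset.filter_singleton, if_pos hji, Finset.card_singleton]
        rw [hc, pow_one, show ∀ y : cechC A m 0, (-1 : polyR A m) • y = -y from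
            fun y => neg_one_smul _ y, add_neg_cancel]
    rw [add_assoc, ← Finset.sum_add_distrib, Finset.sum_congr rfl hsimp,
      Finset.sum_const_zero, add_zero]
  · -- case `j ∉ T`
    rw [targ0_neg A m T a hU hjT, map_zero, zero_add]
    rw [cechD_elofF A m 0 T hT, map_sum, Finset.sum_congr rfl hterm2]
    rw [Finset.sum_eq_single_of_mem j (Finset.mem_compl.2 hjT)]
    · rw [if_pos (Finset.mem_insert_self j T), Finset.erase_insert hjT,
        filt_min_card (m := m) _ _ hU hTU, pow_zero, one_smul]
    · intro i hi hij
      rw [if_neg (by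
        intro hmem
        rcases Finset.mem_insert.1 hmem with h | h
        · exact hij h.symm
        · exact hjT h), smul_zero]
-- ============== the homotopy identity in degree -1 ==============

lemma monomial_full_support_mem (a : Fin m →₀ ℕ) (hfull : a.support = Finset.univ) :
    (monomial a (1 : A) : polyR A m) ∈
      Ideal.span {(∏ i : Fin m, MvPolynomial.X i : polyR A m)} := by
  rw [Ideal.mem_span_singleton]
  have h1 : (monomial a (1 : A) : polyR A m) = ∏ i : Fin m, (MvPolynomial.X i : polyR A m) ^ a i := by
    rw [monomial_eq, map_one, one_mul]
    exact Finsupp.prod_fintype _ _ (fun i => pow_zero _)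
  rw [h1]
  exact Finset.prod_dvd_prod_of_dvd _ _ (fun i _ => dvd_pow_self _ (by
    rw [← Finsupp.mem_support_iff, hfull]; exact Finset.mem_univ i))

set_option maxHeartbeats 1000000 in
set_option synthInstance.maxHeartbeats 400000 in
theorem homotopy_aug :
    (cechH0 A m) ∘ₗ ((cechAug A m).restrictScalars A) = LinearMap.id := by
  rw [← LinearMap.cancel_right
    (g := (Ideal.Quotient.mkₐ A
      (Ideal.span {(∏ i : Fin m, MvPolynomial.X i : polyR A m)})).toLinearMap)
    (Ideal.Quotient.mkₐ_surjective A _)]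
  apply Module.Basis.ext (MvPolynomial.basisMonomials (Fin m) A)
  intro a
  have hb : MvPolynomial.basisMonomials (Fin m) A a = (monomial a 1 : polyR A m) := by
    rw [coe_basisMonomials]
  simp only [LinearMap.comp_apply, AlgHom.toLinearMap_apply, Ideal.Quotient.mkₐ_eq_mk, hb,
    LinearMap.restrictScalars_apply, LinearMap.id_apply]
  rw [cechAug_mk, map_sum]
  have hterm : ∀ i : Fin m,
      cechH0 A m (elofF A m 0 ({i} : Finset (Fin m)) (monomial a 1)) =
      if i ∈ a.support then 0 else targ0 A m ({i} : Finset (Fin m)) a := by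
    intro i
    rw [cechH0_elofF A m _ (Finset.card_singleton i) a]
    by_cases hia : i ∈ a.support
    · rw [if_pos hia, if_neg (by rw [Finset.disjoint_singleton_right]; exact fun h => h hia)]
    · rw [if_neg hia, if_pos (Finset.disjoint_singleton_right.2 hia)]
  rw [Finset.sum_congr rfl (fun i _ => hterm i)]
  by_cases hfull : a.support = Finset.univ
  · rw [Finset.sum_eq_zero (fun i _ => by rw [if_pos (hfull ▸ Finset.mem_univ i)])]
    exact (Ideal.Quotient.eq_zero_iff_mem.2 (monomial_full_support_mem A m a hfull)).symm
  · have hU : (a.supportᶜ : Finset (Fin m)).Nonempty := by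
      rw [Finset.nonempty_iff_ne_empty]
      intro h
      exact hfull (by rw [← Finset.compl_empty, ← h, compl_compl])
    set j := (a.supportᶜ : Finset (Fin m)).min' hU with hjdef
    have hjsupp : j ∉ a.support := Finset.mem_compl.1 (Finset.min'_mem _ hU)
    rw [Finset.sum_eq_single_of_mem j (Finset.mem_univ j)]
    · rw [if_neg hjsupp, targ0_pos A m _ a hU (Finset.mem_singleton_self j)]
    · intro i _ hij
      by_cases hia : i ∈ a.support
      · rw [if_pos hia]
      · rw [if_neg hia, targ0_neg A m _ a hU (fun h => hij (Finset.mem_singleton.1 h).symm)]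

set_option maxHeartbeats 2000000 in
set_option synthInstance.maxHeartbeats 400000 in
/-- `d ∘ d = 0`, and the augmented Cech complex
`0 → R/(X_1⋯X_m) → C^0 → C^1 → ⋯ → C^{m-1} → 0` is exact. -/
theorem cech_resolution (hm : 1 ≤ m) :
    (∀ p : ℕ, (cechD A m (p + 1)).comp (cechD A m p) = 0) ∧
    Function.Injective (cechAug A m) ∧
    LinearMap.range (cechAug A m) = LinearMap.ker (cechD A m 0) ∧
    (∀ p : ℕ, LinearMap.range (cechD A m p) = LinearMap.ker (cechD A m (p + 1))) := by
  refine ⟨cechDD A m, ?_, ?_, ?_⟩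
  · intro x y hxy
    have hx := LinearMap.congr_fun (homotopy_aug A m) x
    have hy := LinearMap.congr_fun (homotopy_aug A m) y
    simp only [LinearMap.comp_apply, LinearMap.restrictScalars_apply,
      LinearMap.id_apply] at hx hy
    rw [← hx, ← hy, hxy]
  · apply le_antisymm
    · rintro x ⟨y, rfl⟩
      rw [LinearMap.mem_ker]
      have h := LinearMap.congr_fun (cechD_aug A m) y
      simpa using h
    · intro x hx
      have h := LinearMap.congr_fun (homotopy_zero A m) x
      simp only [LinearMap.add_apply, LinearMap.comp_apply, LinearMap.restrictScalars_apply,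
        LinearMap.id_apply] at h
      rw [LinearMap.mem_ker] at hx
      rw [hx, map_zero, add_zero] at h
      exact ⟨cechH0 A m x, h⟩
  · intro p
    apply le_antisymm
    · rintro x ⟨y, rfl⟩
      rw [LinearMap.mem_ker]
      have h := LinearMap.congr_fun (cechDD A m p) y
      simpa using h
    · intro x hx
      have h := LinearMap.congr_fun (homotopy_succ A m p) x
      simp only [LinearMap.add_apply, LinearMap.comp_apply, LinearMap.restrictScalars_apply,
        LinearMap.id_apply] at h
      rw [LinearMap.mem_ker] at hx
      rw [hx, map_zero, add_zero] at h
      exact ⟨cechH A m p x, h⟩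
end

section
/- Let 𝒜 be an abelian category and n ≥ 0 an integer. Let A and B be objects of 𝒜 equipped with finite decreasing filtrations by subobjects A = W^0A ⊇ W^1A ⊇ ⋯ ⊇ W^nA ⊇ W^{n+1}A = 0 and B = W^0B ⊇ W^1B ⊇ ⋯ ⊇ W^nB ⊇ W^{n+1}B = 0; write Gr^qA := W^qA/W^{q+1}A and Gr^qB := W^qB/W^{q+1}B. Suppose given isomorphisms φ_q : Gr^qA ≅ Gr^qB for 0 ≤ q ≤ n such that: (i) Ext^1(Gr^qA, W^{q+2}A) = 0 for all 0 ≤ q ≤ n−1; (ii) Hom(Gr^qA, W^{q+1}A) = 0 for all 0 ≤ q ≤ n; (iii) for each 0 ≤ q ≤ n−1, the extension class in Ext^1(Gr^qA, Gr^{q+1}A) of the short exact sequence 0 → Gr^{q+1}A → W^qA/W^{q+2}A → Gr^qA → 0 corresponds, under the isomorphisms φ_q and φ_{q+1}, to the extension class in Ext^1(Gr^qB, Gr^{q+1}B) of the short exact sequence 0 → Gr^{q+1}B → W^qB/W^{q+2}B → Gr^qB → 0. Then there exists a unique isomorphism f : A ≅ B such that f maps W^qA isomorphically onto W^qB for all q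 and induces φ_q on Gr^q for all q. -/
/-!
Statement 6: uniqueness of a filtered isomorphism lifting given isomorphisms on
the graded pieces of finite filtrations, under Ext- and Hom-vanishing conditions
and agreement of the successive extension classes.

A finite decreasing filtration `A = W^0 A ⊇ W^1 A ⊇ ⋯ ⊇ W^{n+1} A = 0` is encoded
by objects `WA q` together with monomorphisms `ιA q : WA (q+1) ⟶ WA q`, with
`WA q` a zero object for `q ≥ n + 1` (and `A := WA 0`).  The graded piece
`Gr^q A = W^q A / W^{q+1} A` is `cokernel (ιA q)`, and the subquotient
`W^q A / W^{q+2} A` is `cokernel (ιA (q+1) ≫ ιA q)`.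

`Ext^1(X, Y) = 0` is expressed as: every short exact sequence
`0 → Y → E → X → 0` splits; and the equality of two extension classes (with
isomorphic outer terms) is expressed as the existence of an isomorphism of the
middle terms compatible with the given isomorphisms of the outer terms.
-/

open CategoryTheory CategoryTheory.Limits

universe v u

variable {𝒜 : Type u} [Category.{v} 𝒜] [Abelian 𝒜]

/-- Package of the properties of a pullback that we need, with the pullback object
made opaque. -/
lemma filtered_pb_pack {X Y Z : 𝒜} (f : X ⟶ Z) (g : Y ⟶ Z) (hg : Epi g) :
    ∃ (P : 𝒜) (p : P ⟶ X) (q : P ⟶ Y),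
      p ≫ f = q ≫ g ∧ Epi p ∧
      (∀ {T : 𝒜} (a : T ⟶ X) (b : T ⟶ Y), a ≫ f = b ≫ g →
        ∃ l : T ⟶ P, l ≫ p = a ∧ l ≫ q = b) ∧
      (∀ {T : 𝒜} (l l' : T ⟶ P), l ≫ p = l' ≫ p → l ≫ q = l' ≫ q → l = l') ∧
      (∀ {T : 𝒜} (l : P ⟶ T), (∀ {S : 𝒜} (z : S ⟶ P), z ≫ p = 0 → z ≫ l = 0) →
        ∃ m : X ⟶ T, p ≫ m = l) := by
  haveI := hg
  refine ⟨pullback f g, pullback.fst f g, pullback.snd f g, pullback.condition,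
    inferInstance, ?_, ?_, ?_⟩
  · intro T a b h
    exact ⟨pullback.lift a b h, pullback.lift_fst _ _ _, pullback.lift_snd _ _ _⟩
  · intro T l l' h1 h2
    exact pullback.hom_ext h1 h2
  · intro T l hl
    exact ⟨Abelian.epiDesc _ l (hl _ (kernel.condition _)), Abelian.comp_epiDesc _ _ _⟩

/-- Package of the properties of the cokernel of a mono that we need, with the
cokernel object made opaque. -/
lemma filtered_coker_pack {X Y : 𝒜} (f : X ⟶ Y) [Mono f] :
    ∃ (Q : 𝒜) (π : Y ⟶ Q), f ≫ π = 0 ∧ Epi π ∧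
      (∀ {T : 𝒜} (k : Y ⟶ T), f ≫ k = 0 → ∃ l : Q ⟶ T, π ≫ l = k) ∧
      (∀ {T : 𝒜} (z : T ⟶ Y), z ≫ π = 0 → ∃ w : T ⟶ X, w ≫ f = z) := by
  refine ⟨cokernel f, cokernel.π f, cokernel.condition f, inferInstance, ?_, ?_⟩
  · intro T k hk
    exact ⟨cokernel.desc f k hk, cokernel.π_desc _ _ _⟩
  · intro T z hz
    exact ⟨Abelian.monoLift f z hz, Abelian.monoLift_comp _ _ _⟩

set_option maxHeartbeats 1000000 in
lemma filtered_iso_step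
    {A₂ A₁ A₀ B₂ B₁ B₀ : 𝒜}
    (i₂ : A₂ ⟶ A₁) (i₁ : A₁ ⟶ A₀) (j₂ : B₂ ⟶ B₁) (j₁ : B₁ ⟶ B₀)
    [Mono i₂] [Mono i₁] [Mono j₂] [Mono j₁]
    (φ₁ : cokernel i₂ ≅ cokernel j₂) (φ₀ : cokernel i₁ ≅ cokernel j₁)
    (F2 : A₂ ≅ B₂) (F1 : A₁ ≅ B₁)
    (hcompat : F2.hom ≫ j₂ = i₂ ≫ F1.hom)
    (hco1 : F1.hom ≫ cokernel.π j₂ = cokernel.π i₂ ≫ φ₁.hom)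
    (ψ : cokernel (i₂ ≫ i₁) ≅ cokernel (j₂ ≫ j₁))
    (hψ1 : cokernel.map i₂ (i₂ ≫ i₁) (𝟙 _) i₁ (by simp) ≫ ψ.hom
      = φ₁.hom ≫ cokernel.map j₂ (j₂ ≫ j₁) (𝟙 _) j₁ (by simp))
    (hψ2 : ψ.hom ≫ cokernel.map (j₂ ≫ j₁) j₁ j₂ (𝟙 _) (by simp)
      = cokernel.map (i₂ ≫ i₁) i₁ i₂ (𝟙 _) (by simp) ≫ φ₀.hom)
    (hExt : ∀ (E : 𝒜) (f : A₂ ⟶ E) (g : E ⟶ cokernel i₁) (hfg : f ≫ g = 0),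
      (ShortComplex.mk f g hfg).ShortExact → ∃ σ : cokernel i₁ ⟶ E, σ ≫ g = 𝟙 (cokernel i₁)) :
    ∃ F0 : A₀ ≅ B₀, F1.hom ≫ j₁ = i₁ ≫ F0.hom ∧
      F0.hom ≫ cokernel.π j₁ = cokernel.π i₁ ≫ φ₀.hom := by
  have u : A₀ ⟶ cokernel (j₂ ≫ j₁) := cokernel.π (i₂ ≫ i₁) ≫ ψ.hom
  obtain ⟨X, p, q2, hcond, hpepi, hlift, hext, hdesc⟩ :=
    filtered_pb_pack (cokernel.π (i₂ ≫ i₁) ≫ ψ.hom) (cokernel.π (j₂ ≫ j₁)) inferInstance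
  -- the key commutation used to define `j`
  have key : i₁ ≫ cokernel.π (i₂ ≫ i₁) ≫ ψ.hom = (F1.hom ≫ j₁) ≫ cokernel.π (j₂ ≫ j₁) := by
    have h1 : i₁ ≫ cokernel.π (i₂ ≫ i₁)
        = cokernel.π i₂ ≫ cokernel.map i₂ (i₂ ≫ i₁) (𝟙 _) i₁ (by simp) := by
      simp
    have h2 : cokernel.π j₂ ≫ cokernel.map j₂ (j₂ ≫ j₁) (𝟙 _) j₁ (by simp)
        = j₁ ≫ cokernel.π (j₂ ≫ j₁) := by simp
    rw [← Category.assoc, h1, Category.assoc, hψ1, ← Category.assoc, ← hco1]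
    rw [Category.assoc, h2, Category.assoc]
  obtain ⟨j, hjp, hjq⟩ := hlift i₁ (F1.hom ≫ j₁) key
  haveI : Mono j := by
    have : Mono (j ≫ p) := by rw [hjp]; infer_instance
    exact mono_of_mono j p
  obtain ⟨E, πE, hjπE, hπEepi, hEdesc, hEker⟩ := filtered_coker_pack j
  obtain ⟨gbar, hπEg⟩ : ∃ gbar : E ⟶ cokernel i₁, πE ≫ gbar = p ≫ cokernel.π i₁ := by
    refine hEdesc _ ?_
    rw [← Category.assoc, hjp, cokernel.condition]
  obtain ⟨κ, hκp, hκq⟩ : ∃ κ : B₂ ⟶ X,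
      κ ≫ p = 0 ∧ κ ≫ q2 = j₂ ≫ j₁ := by
    obtain ⟨κ, h1, h2⟩ := hlift (0 : B₂ ⟶ A₀) (j₂ ≫ j₁) (by simp)
    exact ⟨κ, h1, h2⟩
  haveI : Mono κ := by
    have : Mono (κ ≫ q2) := by rw [hκq]; infer_instance
    exact mono_of_mono κ q2
  -- `p` and `πE` are jointly monic
  have jointmono : ∀ {T : 𝒜} (z : T ⟶ X), z ≫ p = 0 → z ≫ πE = 0 → z = 0 := by
    intro T z hzp hzπ
    obtain ⟨w, hw⟩ := hEker z hzπ
    have : w ≫ i₁ = 0 := by rw [← hjp, ← Category.assoc, hw]; exact hzp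
    have hw0 : w = 0 := zero_of_comp_mono i₁ this
    rw [← hw, hw0, zero_comp]
  -- `gbar` is a cokernel of `F2.hom ≫ κ ≫ πE`
  have hzero : (F2.hom ≫ κ ≫ πE) ≫ gbar = 0 := by
    rw [Category.assoc, Category.assoc, hπEg, ← Category.assoc κ, hκp, zero_comp, comp_zero]
  haveI : Epi gbar := by
    haveI := hpepi
    have : Epi (πE ≫ gbar) := by rw [hπEg]; infer_instance
    exact epi_of_epi πE gbar
  have iscoker : IsColimit (CokernelCofork.ofπ gbar hzero) := by
    refine CokernelCofork.IsColimit.ofπ' gbar hzero (fun {T} k hk => ?_)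
    have hκk : κ ≫ πE ≫ k = 0 := by
      rw [Category.assoc, Category.assoc] at hk
      rwa [← cancel_epi F2.hom, comp_zero]
    have hex : ∃ l' : A₀ ⟶ T, p ≫ l' = πE ≫ k := by
      refine hdesc _ ?_
      intro S z hz
      have h1 : (z ≫ q2) ≫ cokernel.π (j₂ ≫ j₁) = 0 := by
        rw [Category.assoc, ← hcond, ← Category.assoc, hz, zero_comp]
      obtain ⟨w2, hw2⟩ : ∃ w2 : S ⟶ B₂, w2 ≫ (j₂ ≫ j₁) = z ≫ q2 :=
        ⟨Abelian.monoLift (j₂ ≫ j₁) _ h1, Abelian.monoLift_comp _ _ h1⟩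
      have hfact : z = w2 ≫ κ := by
        refine hext _ _ ?_ ?_
        · rw [Category.assoc, hκp, comp_zero]; exact hz
        · rw [Category.assoc, hκq, hw2]
      rw [hfact, Category.assoc, hκk, comp_zero]
    have hil' : i₁ ≫ hex.choose = 0 := by
      rw [← hjp, Category.assoc, hex.choose_spec, ← Category.assoc, hjπE, zero_comp]
    refine ⟨cokernel.desc i₁ hex.choose hil', ?_⟩
    haveI := hπEepi
    rw [← cancel_epi πE, ← Category.assoc, hπEg, Category.assoc, cokernel.π_desc,
      hex.choose_spec]
  haveI hmono1 : Mono (κ ≫ πE) := by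
    apply Preadditive.mono_of_cancel_zero
    intro P z hz
    have h1 : (z ≫ κ) ≫ p = 0 := by rw [Category.assoc, hκp, comp_zero]
    have h2 : (z ≫ κ) ≫ πE = 0 := by rw [Category.assoc]; exact hz
    have := jointmono (z ≫ κ) h1 h2
    exact zero_of_comp_mono κ this
  haveI : Mono (F2.hom ≫ κ ≫ πE) := mono_comp _ _
  have hSE : (ShortComplex.mk (F2.hom ≫ κ ≫ πE) gbar hzero).ShortExact :=
    ⟨ShortComplex.exact_of_g_is_cokernel _ iscoker⟩
  obtain ⟨σ, hσ⟩ := hExt _ _ _ _ hSE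
  -- construct the section `s : A₀ ⟶ X`
  obtain ⟨Z, pr1, pr2, hcond2, hpr1epi, hlift2, hext2, hdesc2⟩ :=
    filtered_pb_pack (cokernel.π i₁ ≫ σ) πE hπEepi
  have hδ : (pr2 ≫ p - pr1) ≫ cokernel.π i₁ = 0 := by
    rw [Preadditive.sub_comp, Category.assoc, ← hπEg, ← Category.assoc, ← hcond2]
    rw [Category.assoc, Category.assoc, hσ, Category.comp_id, sub_self]
  obtain ⟨e, he⟩ : ∃ e : Z ⟶ A₁, e ≫ i₁ = pr2 ≫ p - pr1 :=
    ⟨Abelian.monoLift i₁ _ hδ, Abelian.monoLift_comp _ _ hδ⟩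
  have hl'p : (pr2 - e ≫ j) ≫ p = pr1 := by
    rw [Preadditive.sub_comp, Category.assoc, hjp, he]; abel
  have hl'πE : (pr2 - e ≫ j) ≫ πE = pr1 ≫ (cokernel.π i₁ ≫ σ) := by
    rw [Preadditive.sub_comp, Category.assoc, hjπE, comp_zero, sub_zero, ← hcond2]
  obtain ⟨s, hps⟩ : ∃ s : A₀ ⟶ X, pr1 ≫ s = pr2 - e ≫ j := by
    refine hdesc2 _ ?_
    intro S z hz
    apply jointmono
    · rw [Category.assoc, hl'p]; exact hz
    · rw [Category.assoc, hl'πE, ← Category.assoc, hz, zero_comp]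
  haveI := hpr1epi
  have hsp : s ≫ p = 𝟙 A₀ := by
    rw [← cancel_epi pr1, ← Category.assoc, hps, hl'p, Category.comp_id]
  have hsπE : s ≫ πE = cokernel.π i₁ ≫ σ := by
    rw [← cancel_epi pr1, ← Category.assoc, hps, hl'πE]
  have hjs : i₁ ≫ s = j := by
    have h1 : (i₁ ≫ s - j) ≫ p = 0 := by
      rw [Preadditive.sub_comp, Category.assoc, hsp, Category.comp_id, hjp, sub_self]
    have h2 : (i₁ ≫ s - j) ≫ πE = 0 := by
      rw [Preadditive.sub_comp, Category.assoc, hsπE, hjπE, ← Category.assoc,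
        cokernel.condition i₁, zero_comp, sub_self]
    have := jointmono _ h1 h2
    rwa [sub_eq_zero] at this
  have hf0ι : i₁ ≫ (s ≫ q2) = F1.hom ≫ j₁ := by
    rw [← Category.assoc, hjs, hjq]
  have hf0π' : (s ≫ q2) ≫ cokernel.π (j₂ ≫ j₁) = cokernel.π (i₂ ≫ i₁) ≫ ψ.hom := by
    rw [Category.assoc, ← hcond, ← Category.assoc, hsp, Category.id_comp]
  have hco0 : (s ≫ q2) ≫ cokernel.π j₁ = cokernel.π i₁ ≫ φ₀.hom := by
    have h1 : cokernel.π (j₂ ≫ j₁) ≫ cokernel.map (j₂ ≫ j₁) j₁ j₂ (𝟙 _) (by simp)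
        = cokernel.π j₁ := by simp
    have h2 : cokernel.π (i₂ ≫ i₁) ≫ cokernel.map (i₂ ≫ i₁) i₁ i₂ (𝟙 _) (by simp)
        = cokernel.π i₁ := by simp
    rw [← h1, ← Category.assoc, hf0π', Category.assoc, hψ2, ← Category.assoc, h2]
  -- `s ≫ q2` is an isomorphism
  haveI : Mono (s ≫ q2) := by
    apply Preadditive.mono_of_cancel_zero
    intro P z hz
    have h1 : z ≫ cokernel.π i₁ = 0 := by
      have h : (z ≫ cokernel.π i₁) ≫ φ₀.hom = 0 := by
        rw [Category.assoc, ← hco0, ← Category.assoc, hz, zero_comp]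
      rw [← cancel_mono φ₀.hom, zero_comp]; exact h
    obtain ⟨w, hw⟩ : ∃ w : P ⟶ A₁, w ≫ i₁ = z :=
      ⟨Abelian.monoLift i₁ z h1, Abelian.monoLift_comp _ _ h1⟩
    have h2 : w ≫ (F1.hom ≫ j₁) = 0 := by
      rw [← hf0ι, ← Category.assoc, hw]; exact hz
    haveI : Mono (F1.hom ≫ j₁) := mono_comp _ _
    have hw0 : w = 0 := zero_of_comp_mono _ h2
    rw [← hw, hw0, zero_comp]
  haveI : Epi (s ≫ q2) := by
    apply Preadditive.epi_of_cancel_zero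
    intro R z hz
    have h1 : j₁ ≫ z = 0 := by
      have h : F1.hom ≫ j₁ ≫ z = 0 := by
        rw [← Category.assoc, ← hf0ι, Category.assoc, hz, comp_zero]
      rw [← cancel_epi F1.hom, comp_zero]; exact h
    have hzdesc : z = cokernel.π j₁ ≫ cokernel.desc j₁ z h1 := (cokernel.π_desc _ _ _).symm
    have h3 : φ₀.hom ≫ cokernel.desc j₁ z h1 = 0 := by
      rw [← cancel_epi (cokernel.π i₁), comp_zero, ← Category.assoc, ← hco0, Category.assoc,
        ← hzdesc, hz]
    have hd0 : cokernel.desc j₁ z h1 = 0 := by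
      rw [← cancel_epi φ₀.hom, comp_zero]; exact h3
    rw [hzdesc, hd0, comp_zero]
  haveI : IsIso (s ≫ q2) := isIso_of_mono_of_epi _
  exact ⟨asIso (s ≫ q2), by rw [asIso_hom, hf0ι], by rw [asIso_hom]; exact hco0⟩

set_option maxHeartbeats 1000000

theorem filtered_iso_existsUnique
    {𝒜 : Type u} [Category.{v} 𝒜] [Abelian 𝒜] (n : ℕ)
    (WA WB : ℕ → 𝒜)
    (ιA : ∀ q, WA (q + 1) ⟶ WA q) (ιB : ∀ q, WB (q + 1) ⟶ WB q)
    [∀ q, Mono (ιA q)] [∀ q, Mono (ιB q)]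
    (hA : ∀ q, n + 1 ≤ q → IsZero (WA q)) (hB : ∀ q, n + 1 ≤ q → IsZero (WB q))
    -- the given isomorphisms `φ_q : Gr^q A ≅ Gr^q B`
    (φ : ∀ q, cokernel (ιA q) ≅ cokernel (ιB q))
    -- (i) `Ext^1(Gr^q A, W^{q+2} A) = 0` for `0 ≤ q ≤ n - 1`:
    -- every short exact sequence `0 → W^{q+2} A → E → Gr^q A → 0` splits
    (hExt : ∀ q, q + 1 ≤ n → ∀ (E : 𝒜) (f : WA (q + 2) ⟶ E)
      (g : E ⟶ cokernel (ιA q)) (hfg : f ≫ g = 0),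
      (ShortComplex.mk f g hfg).ShortExact →
        ∃ σ : cokernel (ιA q) ⟶ E, σ ≫ g = 𝟙 (cokernel (ιA q)))
    -- (ii) `Hom(Gr^q A, W^{q+1} A) = 0` for `0 ≤ q ≤ n`
    (hHom : ∀ q, q ≤ n → ∀ f : cokernel (ιA q) ⟶ WA (q + 1), f = 0)
    -- (iii) for `0 ≤ q ≤ n - 1`, the extension classes of
    -- `0 → Gr^{q+1} A → W^q A/W^{q+2} A → Gr^q A → 0` and
    -- `0 → Gr^{q+1} B → W^q B/W^{q+2} B → Gr^q B → 0` correspond under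
    -- `φ_q` and `φ_{q+1}`: there is an isomorphism of the two extensions
    (hClass : ∀ q, q + 1 ≤ n →
      ∃ ψ : cokernel (ιA (q + 1) ≫ ιA q) ≅ cokernel (ιB (q + 1) ≫ ιB q),
        cokernel.map (ιA (q + 1)) (ιA (q + 1) ≫ ιA q) (𝟙 _) (ιA q) (by simp) ≫ ψ.hom
          = (φ (q + 1)).hom ≫
            cokernel.map (ιB (q + 1)) (ιB (q + 1) ≫ ιB q) (𝟙 _) (ιB q) (by simp) ∧
        ψ.hom ≫ cokernel.map (ιB (q + 1) ≫ ιB q) (ιB q) (ιB (q + 1)) (𝟙 _) (by simp)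
          = cokernel.map (ιA (q + 1) ≫ ιA q) (ιA q) (ιA (q + 1)) (𝟙 _) (by simp) ≫
            (φ q).hom) :
    -- conclusion: a unique isomorphism `f : A ≅ B` mapping `W^q A` isomorphically
    -- onto `W^q B` for all `q` and inducing `φ_q` on the graded pieces
    ∃! f : WA 0 ≅ WB 0,
      ∃ F : ∀ q, WA q ≅ WB q, F 0 = f ∧
        (∀ q, (F (q + 1)).hom ≫ ιB q = ιA q ≫ (F q).hom) ∧
        (∀ q, ∀ (w : ιA q ≫ (F q).hom = (F (q + 1)).hom ≫ ιB q),
          cokernel.map (ιA q) (ιB q) (F (q + 1)).hom (F q).hom w = (φ q).hom) := by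
  -- the inductive statement: a compatible family of isomorphisms above level `t`
  set P : ℕ → Prop := fun t => ∃ F : ∀ q, t ≤ q → (WA q ≅ WB q),
    (∀ q (h : t ≤ q), (F (q + 1) (h.trans (Nat.le_succ q))).hom ≫ ιB q
        = ιA q ≫ (F q h).hom) ∧
    (∀ q (h : t ≤ q), (F q h).hom ≫ cokernel.π (ιB q) = cokernel.π (ιA q) ≫ (φ q).hom)
    with hP
  have base : P (n + 1) := by
    refine ⟨fun q h => (hA q h).iso (hB q h), ?_, ?_⟩
    · intro q h
      exact (hA (q + 1) (h.trans (Nat.le_succ q))).eq_of_src _ _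
    · intro q h
      exact (hA q h).eq_of_src _ _
  have step : ∀ t, t ≤ n → P (t + 1) → P t := by
    intro t htn ⟨F, hFc, hFco⟩
    -- construct the new isomorphism at level `t`
    have main : ∃ Fnew : WA t ≅ WB t,
        (F (t + 1) (le_refl _)).hom ≫ ιB t = ιA t ≫ Fnew.hom ∧
        Fnew.hom ≫ cokernel.π (ιB t) = cokernel.π (ιA t) ≫ (φ t).hom := by
      rcases Nat.lt_or_ge t n with htlt | htge
      · -- main inductive step
        obtain ⟨ψ, hψ1, hψ2⟩ := hClass t htlt
        exact filtered_iso_step (ιA (t + 1)) (ιA t) (ιB (t + 1)) (ιB t)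
          (φ (t + 1)) (φ t) (F (t + 2) (by omega)) (F (t + 1) (le_refl _))
          (hFc (t + 1) (le_refl _)) (hFco (t + 1) (le_refl _)) ψ hψ1 hψ2
          (hExt t htlt)
      · -- base of the construction: `t = n`, where `W^{t+1} A = 0`
        have hz : ιA t = 0 := (hA (t + 1) (by omega)).eq_of_src _ _
        have hz' : ιB t = 0 := (hB (t + 1) (by omega)).eq_of_src _ _
        haveI h1 : IsIso (cokernel.π (ιA t)) := by rw [hz]; infer_instance
        haveI h2 : IsIso (cokernel.π (ιB t)) := by rw [hz']; infer_instance
        refine ⟨asIso (cokernel.π (ιA t)) ≪≫ φ t ≪≫ (asIso (cokernel.π (ιB t))).symm,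
          ?_, ?_⟩
        · exact (hA (t + 1) (by omega)).eq_of_src _ _
        · simp
    obtain ⟨Fnew, hnewc, hnewco⟩ := main
    refine ⟨fun q h => if hq : t + 1 ≤ q then F q hq
      else (show t = q by omega) ▸ Fnew, ?_, ?_⟩
    · intro q h
      beta_reduce
      by_cases hq : t + 1 ≤ q
      · rw [dif_pos hq, dif_pos (hq.trans (Nat.le_succ q))]
        exact hFc q hq
      · have hqt : q = t := by omega
        subst hqt
        rw [dif_pos (le_refl _), dif_neg hq]
        exact hnewc
    · intro q h
      beta_reduce
      by_cases hq : t + 1 ≤ q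
      · rw [dif_pos hq]
        exact hFco q hq
      · have hqt : q = t := by omega
        subst hqt
        rw [dif_neg hq]
        exact hnewco
  have all : ∀ d, P (n + 1 - d) := by
    intro d
    induction d with
    | zero => simpa using base
    | succ d ih =>
      rcases Nat.eq_zero_or_pos (n + 1 - d) with h0 | hpos
      · have : n + 1 - (d + 1) = n + 1 - d := by omega
        rw [this]; exact ih
      · have ht : (n + 1 - (d + 1)) + 1 = n + 1 - d := by omega
        exact step _ (by omega) (ht.symm ▸ ih)
  have P0 : P 0 := by
    have h := all (n + 1)
    simpa using h
  obtain ⟨F, hc, hco⟩ := P0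
  refine ⟨F 0 (Nat.zero_le 0), ⟨fun q => F q (Nat.zero_le q), rfl, fun q => hc q _, ?_⟩, ?_⟩
  · intro q w
    rw [← cancel_epi (cokernel.π (ιA q)), cokernel.π_desc]
    exact hco q _
  · rintro g ⟨G, hG0, hGc, hGco⟩
    have key : ∀ d q, n + 1 ≤ q + d → (G q).hom = (F q (Nat.zero_le q)).hom := by
      intro d
      induction d with
      | zero =>
        intro q hq
        exact (hA q (by omega)).eq_of_src _ _
      | succ d ih =>
        intro q hq
        by_cases h' : n + 1 ≤ q + d
        · exact ih q h'
        · have hqn : q ≤ n := by omega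
          have ih1 : (G (q + 1)).hom = (F (q + 1) (Nat.zero_le _)).hom :=
            ih (q + 1) (by omega)
          have hδι : ιA q ≫ ((G q).hom - (F q (Nat.zero_le q)).hom) = 0 := by
            rw [Preadditive.comp_sub, ← hGc q, ← hc q (Nat.zero_le q), ih1, sub_self]
          have Gco : (G q).hom ≫ cokernel.π (ιB q) = cokernel.π (ιA q) ≫ (φ q).hom := by
            have w : ιA q ≫ (G q).hom = (G (q + 1)).hom ≫ ιB q := (hGc q).symm
            have h := hGco q w
            rw [← h, cokernel.π_desc]
          have hδπ : ((G q).hom - (F q (Nat.zero_le q)).hom) ≫ cokernel.π (ιB q) = 0 := by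
            rw [Preadditive.sub_comp, Gco, hco q (Nat.zero_le q), sub_self]
          have hδ : (G q).hom - (F q (Nat.zero_le q)).hom
              = cokernel.π (ιA q) ≫ cokernel.desc (ιA q) _ hδι :=
            (cokernel.π_desc _ _ _).symm
          have hbar : cokernel.desc (ιA q) _ hδι ≫ cokernel.π (ιB q) = 0 := by
            rw [← cancel_epi (cokernel.π (ιA q)), ← Category.assoc, ← hδ, hδπ, comp_zero]
          obtain ⟨w, hw⟩ : ∃ w : cokernel (ιA q) ⟶ WB (q + 1),
              w ≫ ιB q = cokernel.desc (ιA q) _ hδι :=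
            ⟨Abelian.monoLift (ιB q) _ hbar, Abelian.monoLift_comp _ _ hbar⟩
          have hw0 : w = 0 := by
            have h1 : w ≫ (F (q + 1) (Nat.zero_le _)).inv = 0 := hHom q hqn _
            have := congrArg (fun x => x ≫ (F (q + 1) (Nat.zero_le _)).hom) h1
            simpa using this
          have : (G q).hom - (F q (Nat.zero_le q)).hom = 0 := by
            rw [hδ, ← hw, hw0, zero_comp, comp_zero]
          have := sub_eq_zero.mp this
          exact this
    have h0 : (G 0).hom = (F 0 (Nat.zero_le 0)).hom := key (n + 1) 0 (by omega)
    rw [← hG0]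
    exact Iso.ext h0
end

section
/- Let R be a ring and K a cochain complex of R-modules with filtrations F and G by subcomplexes such that (K; F, G) is bi-strict. Then for all i, p, q the natural map H^i(F_pK ∩ G_qK) → H^i((F_pK ∩ G_qK)/(F_{p−1}K ∩ G_qK + F_pK ∩ G_{q−1}K)) induced by the quotient map of complexes is surjective, and its kernel equals the sum of the images of H^i(F_{p−1}K ∩ G_qK) and H^i(F_pK ∩ G_{q−1}K) in H^i(F_pK ∩ G_qK). In other words, the functors H^i, Gr^F_p and Gr^G_q commute: Gr^F_p Gr^G_q H^i(K) ≅ H^i(Gr^F_p Gr^G_q K), where the filtrations on H^i(K) are defined by the (injective) images of H^i(F_pK), H^i(G_qK), H^i(F_pK ∩ G_qK). -/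
/-!
Statement 8: for a bi-strict bifiltered complex `(K; F, G)`, the functors `H^i`,
`Gr^F_p` and `Gr^G_q` commute: the natural map
`H^i(F_p K ∩ G_q K) → H^i(Gr^F_p Gr^G_q K)` is surjective, and its kernel is the
sum of the images of `H^i(F_{p-1} K ∩ G_q K)` and `H^i(F_p K ∩ G_{q-1} K)`.
Here `Gr^F_p Gr^G_q K = (F_p K ∩ G_q K)/(F_{p-1} K ∩ G_q K + F_p K ∩ G_{q-1} K)`,
and the homological assertions are expressed elementwise in terms of cycles and
boundaries.

A cochain complex of `R`-modules is encoded by modules `Kc i` (`i : ℤ`) with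
differentials `d i : Kc i →ₗ[R] Kc (i+1)` satisfying `d ∘ d = 0`; a filtration by
subcomplexes is a family `F p i : Submodule R (Kc i)`, monotone in `p` and stable
under `d`.  The homological conditions entering strictness and bi-strictness are
expressed elementwise in terms of cycles (`x` with `d x = 0`) and boundaries
(`x ∈ range d`).
-/

variable {R : Type*} [Ring R]
variable (Kc : ℤ → Type*) [∀ i, AddCommGroup (Kc i)] [∀ i, Module R (Kc i)]
  (d : ∀ i, Kc i →ₗ[R] Kc (i + 1))

/-- `F` is a filtration of the complex `(Kc, d)` by subcomplexes: monotone in the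
filtration index and stable under the differential. -/
def IsFiltrationBySubcomplexes (F : ℤ → ∀ i, Submodule R (Kc i)) : Prop :=
  (∀ i, Monotone (fun p => F p i)) ∧ (∀ p i, ∀ x ∈ F p i, d i x ∈ F p (i + 1))

/-- The filtered complex `(Kc, d, F)` is strict: `d (F_p K^i) = F_p K^{i+1} ∩ d (K^i)`
for all `i, p` (the nontrivial inclusion being `⊇`). -/
def StrictFiltered (F : ℤ → ∀ i, Submodule R (Kc i)) : Prop :=
  ∀ p i, ∀ y ∈ F p (i + 1), y ∈ LinearMap.range (d i) → ∃ x ∈ F p i, d i x = y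

/-- `(K; F, G)` is bi-strict: the natural maps `H^i(F_p K) → H^i(K)`,
`H^i(G_q K) → H^i(K)`, `H^i(F_p K ∩ G_q K) → H^i(K)` are injective, and inside
`H^i(K)` the intersection of the images of `H^i(F_p K)` and `H^i(G_q K)` equals
the image of `H^i(F_p K ∩ G_q K)` (stated elementwise on cycles; the inclusion
`⊇` of the last condition holds automatically). -/
def BiStrict (F G : ℤ → ∀ i, Submodule R (Kc i)) : Prop :=
  (∀ p i, ∀ x ∈ F p (i + 1), d (i + 1) x = 0 → x ∈ LinearMap.range (d i) →
    ∃ z ∈ F p i, d i z = x) ∧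
  (∀ q i, ∀ x ∈ G q (i + 1), d (i + 1) x = 0 → x ∈ LinearMap.range (d i) →
    ∃ z ∈ G q i, d i z = x) ∧
  (∀ p q i, ∀ x ∈ F p (i + 1) ⊓ G q (i + 1), d (i + 1) x = 0 →
    x ∈ LinearMap.range (d i) → ∃ z ∈ F p i ⊓ G q i, d i z = x) ∧
  (∀ p q i (x y : Kc (i + 1)), x ∈ F p (i + 1) → d (i + 1) x = 0 →
    y ∈ G q (i + 1) → d (i + 1) y = 0 → x - y ∈ LinearMap.range (d i) →
    ∃ u ∈ F p (i + 1) ⊓ G q (i + 1), d (i + 1) u = 0 ∧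
      x - u ∈ LinearMap.range (d i))

/-- If `(K; F, G)` is bi-strict, then for all `i, p, q` the natural
map `H^i(F_p K ∩ G_q K) → H^i((F_p K ∩ G_q K)/(F_{p-1} K ∩ G_q K + F_p K ∩ G_{q-1} K))`
is surjective (first conjunct: every cycle of the quotient complex is, modulo the
subobject `F_{p-1} K ∩ G_q K + F_p K ∩ G_{q-1} K` and boundaries `d (F_p K ∩ G_q K)`,
represented by a cycle of `F_p K ∩ G_q K`), and its kernel equals the sum of the
images of `H^i(F_{p-1} K ∩ G_q K)` and `H^i(F_p K ∩ G_{q-1} K)` (second conjunct);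
i.e. `Gr^F_p Gr^G_q H^i(K) ≅ H^i(Gr^F_p Gr^G_q K)`. -/
theorem biStrict_homology_gr_comm
    (F G : ℤ → ∀ i, Submodule R (Kc i))
    (hdd : ∀ i (x : Kc i), d (i + 1) (d i x) = 0)
    (hF : IsFiltrationBySubcomplexes Kc d F)
    (hG : IsFiltrationBySubcomplexes Kc d G)
    (hbi : BiStrict Kc d F G) :
    -- surjectivity of `H^i(F_p ∩ G_q) → H^i(Gr^F_p Gr^G_q K)`
    (∀ p q i (x : Kc (i + 1)), x ∈ F p (i + 1) ⊓ G q (i + 1) →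
      d (i + 1) x ∈ (F (p - 1) (i + 1 + 1) ⊓ G q (i + 1 + 1)) ⊔
        (F p (i + 1 + 1) ⊓ G (q - 1) (i + 1 + 1)) →
      ∃ x', x' ∈ F p (i + 1) ⊓ G q (i + 1) ∧ d (i + 1) x' = 0 ∧
        x - x' ∈ (F (p - 1) (i + 1) ⊓ G q (i + 1)) ⊔
          (F p (i + 1) ⊓ G (q - 1) (i + 1)) ⊔
          Submodule.map (d i) (F p i ⊓ G q i)) ∧
    -- the kernel is the sum of the images of `H^i(F_{p-1} ∩ G_q)` and `H^i(F_p ∩ G_{q-1})`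
    (∀ p q i (x : Kc (i + 1)), x ∈ F p (i + 1) ⊓ G q (i + 1) → d (i + 1) x = 0 →
      (x ∈ (F (p - 1) (i + 1) ⊓ G q (i + 1)) ⊔ (F p (i + 1) ⊓ G (q - 1) (i + 1)) ⊔
          Submodule.map (d i) (F p i ⊓ G q i) ↔
        ∃ y z : Kc (i + 1),
          (y ∈ F (p - 1) (i + 1) ⊓ G q (i + 1) ∧ d (i + 1) y = 0) ∧
          (z ∈ F p (i + 1) ⊓ G (q - 1) (i + 1) ∧ d (i + 1) z = 0) ∧
          x - (y + z) ∈ Submodule.map (d i) (F p i ⊓ G q i))) := by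
  obtain ⟨hFs, hGs, hFG, hcap⟩ := hbi
  obtain ⟨hFmono, hFd⟩ := hF
  obtain ⟨hGmono, hGd⟩ := hG
  have hFle : ∀ (i : ℤ), F (0 - 1 + 1) i ≤ F 0 i := fun i => le_of_eq (by norm_num)
  constructor
  · intro p q i x hx hdx
    rw [Submodule.mem_sup] at hdx
    obtain ⟨a, ha, b, hb, hab⟩ := hdx
    have hda : d (i+1+1) a + d (i+1+1) b = 0 := by
      rw [← map_add, hab]; exact hdd (i+1) x
    have hdamem : d (i+1+1) a ∈ F (p-1) (i+1+1+1) ⊓ G (q-1) (i+1+1+1) := by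
      refine ⟨hFd _ _ _ ha.1, ?_⟩
      have : d (i+1+1) a = - d (i+1+1) b := eq_neg_of_add_eq_zero_left hda
      rw [this]; exact neg_mem (hGd _ _ _ hb.2)
    obtain ⟨z, hz, hdz⟩ := hFG (p-1) (q-1) (i+1+1) _ hdamem (hdd (i+1+1) a) ⟨a, rfl⟩
    have hdaz : d (i+1+1) (a - z) = 0 := by rw [map_sub, hdz, sub_self]
    have hdbz : d (i+1+1) (-(b + z)) = 0 := by
      rw [map_neg, map_add, hdz, neg_eq_zero]; exact (add_comm _ _).trans hda
    have key : (a - z) - (-(b + z)) = d (i+1) x := by rw [← hab]; abel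
    obtain ⟨u, hu, hdu, hrest⟩ :=
      hcap (p-1) (q-1) (i+1) (a - z) (-(b + z))
        (sub_mem ha.1 hz.1) hdaz (neg_mem (add_mem hb.2 hz.2))
        hdbz ⟨x, key.symm⟩
    obtain ⟨v, hv⟩ := hrest
    have hαmem : (a - z) - u ∈ F (p-1) (i+1+1) ⊓ G q (i+1+1) := by
      refine ⟨sub_mem (sub_mem ha.1 hz.1) hu.1, ?_⟩
      exact sub_mem (sub_mem ha.2 (hGmono _ (by omega) hz.2)) (hGmono _ (by omega) hu.2)
    have hαcyc : d (i+1+1) ((a - z) - u) = 0 := by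
      rw [map_sub, hdaz, hdu, sub_self]
    obtain ⟨α, hα, hdα⟩ := hFG (p-1) q (i+1) _ hαmem hαcyc ⟨v, hv⟩
    have hβmem : (b + z) + u ∈ F p (i+1+1) ⊓ G (q-1) (i+1+1) := by
      refine ⟨add_mem (add_mem hb.1 (hFmono _ (by omega) hz.1)) (hFmono _ (by omega) hu.1), ?_⟩
      exact add_mem (add_mem hb.2 hz.2) hu.2
    have hβcyc : d (i+1+1) ((b + z) + u) = 0 := by
      rw [map_add, map_add, hdz, hdu, add_zero]; exact (add_comm _ _).trans hda
    have hβbd : d (i+1) (x - v) = (b + z) + u := by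
      rw [map_sub, hv, ← hab]; abel
    obtain ⟨β, hβ, hdβ⟩ := hFG p (q-1) (i+1) _ hβmem hβcyc ⟨x - v, hβbd⟩
    refine ⟨x - (α + β), ⟨?_, ?_⟩, ?_, ?_⟩
    · exact sub_mem hx.1 (add_mem (hFmono _ (by omega) hα.1) hβ.1)
    · exact sub_mem hx.2 (add_mem hα.2 (hGmono _ (by omega) hβ.2))
    · rw [map_sub, map_add, hdα, hdβ, ← hab]; abel
    · have hxx : x - (x - (α + β)) = α + β := by abel
      rw [hxx]
      exact add_mem
        (Submodule.mem_sup_left (Submodule.mem_sup_left hα))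
        (Submodule.mem_sup_left (Submodule.mem_sup_right hβ))
  · intro p q i x hx hdx
    constructor
    · intro hmem
      rw [Submodule.mem_sup] at hmem
      obtain ⟨s, hs, c, hc, hsc⟩ := hmem
      rw [Submodule.mem_sup] at hs
      obtain ⟨a, ha, b, hb, habs⟩ := hs
      obtain ⟨w, hw, hwc⟩ := hc
      have hxabc : x = a + b + d i w := by rw [← hwc, ← habs] at hsc; exact hsc.symm
      have hdab : d (i+1) a + d (i+1) b = 0 := by
        have h1 : d (i+1) x = 0 := hdx
        rw [hxabc, map_add, map_add, hdd i w, add_zero] at h1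
        exact h1
      have hdamem : d (i+1) a ∈ F (p-1) (i+1+1) ⊓ G (q-1) (i+1+1) := by
        refine ⟨hFd _ _ _ ha.1, ?_⟩
        have : d (i+1) a = - d (i+1) b := eq_neg_of_add_eq_zero_left hdab
        rw [this]; exact neg_mem (hGd _ _ _ hb.2)
      obtain ⟨z₀, hz₀, hdz₀⟩ := hFG (p-1) (q-1) (i+1) _ hdamem (hdd (i+1) a) ⟨a, rfl⟩
      refine ⟨a - z₀, b + z₀, ⟨⟨sub_mem ha.1 hz₀.1,
        sub_mem ha.2 (hGmono _ (by omega) hz₀.2)⟩, by rw [map_sub, hdz₀, sub_self]⟩,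
        ⟨⟨add_mem hb.1 (hFmono _ (by omega) hz₀.1), add_mem hb.2 hz₀.2⟩,
          by rw [map_add, hdz₀]; exact (add_comm _ _).trans hdab⟩, ?_⟩
      exact ⟨w, hw, by rw [hxabc]; abel⟩
    · rintro ⟨y, z, ⟨hy, -⟩, ⟨hz, -⟩, hw⟩
      have hxx : x = y + z + (x - (y + z)) := by abel
      rw [hxx]
      exact add_mem
        (add_mem (Submodule.mem_sup_left (Submodule.mem_sup_left hy))
          (Submodule.mem_sup_left (Submodule.mem_sup_right hz)))
        (Submodule.mem_sup_right hw)
end
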